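/- Let f = x1³ + x2²x3 ∈ ℂ[x1,x2,x3] (the cuspidal cubic cone). Then the dual variety V(f)*, i.e., the Zariski closure of {t·∇f(x) : t ∈ ℂ, x ∈ V(f), ∇f(x) ≠ 0}, equals V(4x1³ − 27x2²x3) = {y ∈ ℂ³ : 4y1³ − 27y2²y3 = 0}. -/

import Mathlib

open MvPolynomial Pointwise

/-- Gradient of a multivariate polynomial at a point. -/
noncomputable def grad {n : ℕ} (f : MvPolynomial (Fin n) ℂ) (x : Fin n → ℂ) : Fin n → ℂ :=
  fun i => eval x (pderiv i f)

/-- Zariski closure: zero locus of the ideal of all polynomials vanishing on `S`. -/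
def zclosure {σ : Type} (S : Set (σ → ℂ)) : Set (σ → ℂ) :=
  {x | ∀ p : MvPolynomial σ ℂ, (∀ s ∈ S, eval s p = 0) → eval x p = 0}

/-- Zero locus `V(f)`. -/
def Vp {n : ℕ} (f : MvPolynomial (Fin n) ℂ) : Set (Fin n → ℂ) := {x | eval x f = 0}

/-- Regular locus. -/
def RegL {n : ℕ} (f : MvPolynomial (Fin n) ℂ) : Set (Fin n → ℂ) :=
  {x | eval x f = 0 ∧ grad f x ≠ 0}

/-- Singular locus. -/
def SingL {n : ℕ} (f : MvPolynomial (Fin n) ℂ) : Set (Fin n → ℂ) :=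
  {x | eval x f = 0 ∧ grad f x = 0}

/-- ED correspondence: Zariski closure of pairs (u,x), x regular, u - x ∈ ℂ·∇f(x),
encoded as functions on `Fin n ⊕ Fin n`. -/
def EDcorr {n : ℕ} (f : MvPolynomial (Fin n) ℂ) : Set ((Fin n ⊕ Fin n) → ℂ) :=
  zclosure {w | ∃ u x : Fin n → ℂ, w = Sum.elim u x ∧ x ∈ RegL f ∧ ∃ t : ℂ, u - x = t • grad f x}

/-- ED data singular locus. -/
def DS {n : ℕ} (f : MvPolynomial (Fin n) ℂ) : Set (Fin n → ℂ) :=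
  {u | ∃ x, Sum.elim u x ∈ EDcorr f ∧ x ∈ SingL f}

/-- Dual variety. -/
def dualV {n : ℕ} (f : MvPolynomial (Fin n) ℂ) : Set (Fin n → ℂ) :=
  zclosure {y | ∃ (t : ℂ) (x : Fin n → ℂ), x ∈ RegL f ∧ y = t • grad f x}

/-- Isotropic quadric. -/
def isoQ (n : ℕ) : Set (Fin n → ℂ) := {x | ∑ i, (x i) ^ 2 = 0}

/-- ED data isotropic locus. -/
def DI {n : ℕ} (f : MvPolynomial (Fin n) ℂ) : Set (Fin n → ℂ) :=
  {u | ∃ x, Sum.elim u x ∈ EDcorr f ∧ x ∈ isoQ n ∩ Vp f}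

/-- Zariski-closed sets. -/
def IsZClosed {σ : Type} (S : Set (σ → ℂ)) : Prop := zclosure S = S

/-- Irreducibility with respect to Zariski-closed sets. -/
def IsZIrreducible {σ : Type} (S : Set (σ → ℂ)) : Prop :=
  S.Nonempty ∧ ∀ C₁ C₂ : Set (σ → ℂ), IsZClosed C₁ → IsZClosed C₂ →
    S ⊆ C₁ ∪ C₂ → S ⊆ C₁ ∨ S ⊆ C₂

/-- `C` is an irreducible component of `S`. -/
def IsIrredComponentOf {σ : Type} (C S : Set (σ → ℂ)) : Prop :=
  C ⊆ S ∧ IsZClosed C ∧ IsZIrreducible C ∧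
    ∀ C' : Set (σ → ℂ), IsZClosed C' → IsZIrreducible C' → C ⊆ C' → C' ⊆ S → C' = C


/-- The dual variety of the cuspidal cubic cone `V(x₁³ + x₂²x₃)` is `V(4x₁³ - 27x₂²x₃)`. -/
lemma grad_f (x : Fin 3 → ℂ) :
    grad (X 0 ^ 3 + X 1 ^ 2 * X 2 : MvPolynomial (Fin 3) ℂ) x
      = ![3 * x 0 ^ 2, 2 * x 1 * x 2, x 1 ^ 2] := by
  funext i
  fin_cases i <;> simp [grad, pderiv_X, pderiv_pow, Derivation.leibniz] <;> ring

lemma aeval_eq_eval' (v : Fin 3 → ℂ) (p : MvPolynomial (Fin 3) ℂ) : aeval v p = eval v p := rfl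

lemma mem_raw {y : Fin 3 → ℂ} (t : ℂ) (x : Fin 3 → ℂ)
    (hf : x 0 ^ 3 + x 1 ^ 2 * x 2 = 0)
    (hg : ![3 * x 0 ^ 2, 2 * x 1 * x 2, x 1 ^ 2] ≠ (0 : Fin 3 → ℂ))
    (hy : y = t • ![3 * x 0 ^ 2, 2 * x 1 * x 2, x 1 ^ 2]) :
    y ∈ {y : Fin 3 → ℂ | ∃ (t : ℂ) (x : Fin 3 → ℂ),
      x ∈ RegL (X 0 ^ 3 + X 1 ^ 2 * X 2 : MvPolynomial (Fin 3) ℂ) ∧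
        y = t • grad (X 0 ^ 3 + X 1 ^ 2 * X 2 : MvPolynomial (Fin 3) ℂ) x} :=
  ⟨t, x, ⟨by simp [hf], by rw [grad_f]; exact hg⟩, by rw [grad_f]; exact hy⟩

theorem dual_cuspidal_cubic :
    dualV (X 0 ^ 3 + X 1 ^ 2 * X 2 : MvPolynomial (Fin 3) ℂ) =
      {y : Fin 3 → ℂ | 4 * y 0 ^ 3 - 27 * y 1 ^ 2 * y 2 = 0} := by
  ext y
  simp only [Set.mem_setOf_eq]
  constructor
  · intro hy
    have := hy (C 4 * X 0 ^ 3 - C 27 * X 1 ^ 2 * X 2) ?_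
    · simpa using this
    · rintro s ⟨t, x, ⟨hfx, -⟩, rfl⟩
      rw [grad_f]
      have hf : x 0 ^ 3 + x 1 ^ 2 * x 2 = 0 := by simpa using hfx
      simp only [map_sub, map_mul, map_pow, eval_C, eval_X, Pi.smul_apply, smul_eq_mul,
        Matrix.cons_val_zero, Matrix.cons_val_one, Matrix.head_cons, Matrix.cons_val_two,
        Matrix.tail_cons]
      linear_combination (108 * t ^ 3 * (x 0 ^ 3 - x 1 ^ 2 * x 2)) * hf
  · intro hy p hp
    by_cases h2 : y 2 = 0
    · have h0 : y 0 = 0 := by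
        have : y 0 ^ 3 = 0 := by linear_combination (1/4 : ℂ) * hy + (27/4) * y 1 ^ 2 * h2
        exact pow_eq_zero_iff (by norm_num) |>.mp this
      by_cases h1 : y 1 = 0
      · refine hp y (mem_raw 0 ![-1, 1, 1] (by norm_num [Matrix.cons_val_two]) ?_ ?_)
        · intro h
          have := congrFun h 2
          simp at this
        · funext i
          fin_cases i <;> simp [h0, h1, h2]
      · obtain ⟨c, hc⟩ := IsAlgClosed.exists_pow_nat_eq (y 1 / 2) (n := 3) (by norm_num)
        have hcne : c ≠ 0 := by
          intro h
          rw [h] at hc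
          apply h1
          field_simp at hc
          simpa using hc.symm
        set g : Fin 3 → Polynomial ℂ :=
          ![Polynomial.C (3 * c ^ 2) * Polynomial.X ^ 2, Polynomial.C (y 1),
            Polynomial.X ^ 6] with hg
        set r : Polynomial ℂ := aeval g p with hr
        have heval : ∀ ε : ℂ, r.eval ε = eval (fun i => (g i).eval ε) p := by
          intro ε
          rw [hr, ← Polynomial.coe_aeval_eq_eval, comp_aeval_apply, aeval_eq_eval']
        have key : ∀ ε : ℂ, ε ≠ 0 → r.eval ε = 0 := by
          intro ε hε
          rw [heval]
          have hpt : (fun i => (g i).eval ε) = ![3 * c ^ 2 * ε ^ 2, y 1, ε ^ 6] := by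
            funext i; fin_cases i <;> simp [hg]
          rw [hpt]
          refine hp _ (mem_raw 1 ![-c * ε, ε ^ 3, c ^ 3 / ε ^ 3] ?_ ?_ ?_)
          · simp only [Matrix.cons_val_zero, Matrix.cons_val_one, Matrix.cons_val_two, Matrix.head_cons, Matrix.tail_cons]
            field_simp
            ring
          · intro h
            have h1' := congrFun h 1
            simp at h1'
            rcases h1' with h' | h'
            · exact hε h'
            · rcases h' with h' | h'
              · exact hcne h'
              · exact hε h'
          · funext i
            fin_cases i
            · simp; ring
            · simp
              field_simp
              linear_combination -2 * hc
            · simp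
              ring
        have hr0 : r = 0 := by
          apply Polynomial.eq_zero_of_infinite_isRoot
          apply Set.Infinite.mono (s := {0}ᶜ) _ ((Set.finite_singleton 0).infinite_compl)
          intro x hx
          exact key x hx
        have hyeq : y = fun i => (g i).eval 0 := by
          funext i; fin_cases i <;> simp [hg, h0, h1, h2]
        rw [hyeq, ← heval 0, hr0]
        simp
    · by_cases h0 : y 0 = 0
      · have h1 : y 1 = 0 := by
          have h27 : y 1 ^ 2 * y 2 = 0 := by
            linear_combination (-1/27 : ℂ) * hy + (4/27) * y 0 ^ 2 * h0
          rcases mul_eq_zero.mp h27 with h | h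
          · exact pow_eq_zero_iff (by norm_num) |>.mp h
          · exact absurd h h2
        refine hp y (mem_raw (y 2) ![0, 1, 0] (by norm_num [Matrix.cons_val_two]) ?_ ?_)
        · intro h; have := congrFun h 2; simp at this
        · funext i; fin_cases i <;> simp [h0, h1]
      · refine hp y (mem_raw (y 2) ![-3 * y 1 / (2 * y 0), 1, y 1 / (2 * y 2)] ?_ ?_ ?_)
        · simp only [Matrix.cons_val_zero, Matrix.cons_val_one, Matrix.cons_val_two, Matrix.head_cons, Matrix.tail_cons]
          field_simp
          linear_combination y 1 * hy
        · intro h; have := congrFun h 2; simp at this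
        · funext i
          fin_cases i
          · simp
            field_simp
            linear_combination hy
          · simp
            field_simp
          · simp
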